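/- arXiv:math/9502213 — 4 statements merged into one kernel-verified Lean document; each statement's English description precedes it below -/
import Mathlib

section
/- The Abel polynomials A_n(x) = x(x+n)^{n-1} (with A_0 = 1) form a sequence of binomial type: A_n(x+y) = ∑_{k=0}^{n} C(n,k) A_k(x) A_{n-k}(y) for all n and all x, y. -/
open Polynomial Finset

noncomputable def abelPoly (n : ℕ) : Polynomial ℚ :=
  if n = 0 then 1 else X * (X + (n : Polynomial ℚ)) ^ (n - 1)

lemma abelPoly_succ (n : ℕ) :
    abelPoly (n+1) = X * (X + ((n : Polynomial ℚ) + 1)) ^ n := by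
  simp [abelPoly]

lemma abelPoly_deriv (n : ℕ) :
    derivative (abelPoly (n+1)) = ((n : ℚ)+1) • (abelPoly n).comp (X + 1) := by
  cases n with
  | zero => simp [abelPoly]
  | succ m =>
      rw [abelPoly_succ, abelPoly_succ]
      simp only [derivative_mul, derivative_X, derivative_pow, derivative_add,
        derivative_natCast, derivative_one, add_zero, one_mul, add_comp, X_comp,
        one_comp, mul_comp, pow_comp, natCast_comp, smul_eq_C_mul]
      simp only [map_add, map_one, map_natCast]
      push_cast
      ring


lemma abelPoly_eval_zero : ∀ n : ℕ, (abelPoly n).eval 0 = if n = 0 then 1 else 0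
  | 0 => by simp [abelPoly]
  | (n+1) => by simp [abelPoly_succ]

lemma abelPoly_key (y : ℚ) (n : ℕ) : (abelPoly n).comp (X + C y) =
    ∑ k ∈ range (n+1), C ((n.choose k : ℚ) * (abelPoly (n-k)).eval y) * abelPoly k := by
  induction n with
  | zero => simp [abelPoly]
  | succ n ih =>
      set q : Polynomial ℚ := ∑ k ∈ range (n+1+1),
          C (((n+1).choose k : ℚ) * (abelPoly (n+1-k)).eval y) * abelPoly k with hq
      have hd : derivative ((abelPoly (n+1)).comp (X + C y)) = derivative q := by
        have hL : derivative ((abelPoly (n+1)).comp (X + C y)) =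
            ((n : ℚ)+1) • (abelPoly n).comp (X + C y + 1) := by
          rw [derivative_comp, abelPoly_deriv]
          simp [smul_comp, comp_assoc]
        have hR : derivative q =
            ((n : ℚ)+1) • ((∑ k ∈ range (n+1),
              C ((n.choose k : ℚ) * (abelPoly (n-k)).eval y) * abelPoly k).comp (X + 1)) := by
          rw [hq, derivative_sum]
          rw [Finset.sum_range_succ']
          simp only [derivative_mul, derivative_C, zero_mul, zero_add]
          have h0 : derivative (abelPoly 0) = 0 := by simp [abelPoly]
          rw [h0]
          simp only [mul_zero, add_zero, abelPoly_deriv]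
          rw [Polynomial.sum_comp, Finset.smul_sum]
          refine Finset.sum_congr rfl fun i _ => ?_
          rw [mul_comp, C_comp]
          rw [smul_eq_C_mul, smul_eq_C_mul]
          have hn : (n+1-(i+1)) = n - i := by omega
          rw [hn, ← mul_assoc, ← mul_assoc, ← C_mul, ← C_mul]
          congr 2
          have hc : ((n+1).choose (i+1) : ℚ) * ((i : ℚ)+1) = ((n : ℚ)+1) * (n.choose i : ℚ) := by
            have h := Nat.add_one_mul_choose_eq n i
            have h2 : ((n.succ * n.choose i : ℕ) : ℚ) = ((n.succ.choose i.succ * i.succ : ℕ) : ℚ) := by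
              rw [h]
            push_cast at h2
            linarith
          linear_combination (eval y (abelPoly (n-i))) * hc
        rw [hL, hR, ← ih, comp_assoc]
        congr 2
        simp [add_comp]
        ring
      have h0 : ((abelPoly (n+1)).comp (X + C y)).eval 0 = q.eval 0 := by
        rw [eval_comp]
        simp only [hq, eval_finset_sum, eval_mul, eval_C]
        rw [Finset.sum_eq_single 0]
        · simp [abelPoly_eval_zero]
        · intro b _ hb
          obtain ⟨m, rfl⟩ := Nat.exists_eq_succ_of_ne_zero hb
          simp [abelPoly_eval_zero]
        · simp
      have hsub : derivative ((abelPoly (n+1)).comp (X + C y) - q) = 0 := by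
        rw [derivative_sub, hd, sub_self]
      have hc2 := Polynomial.eq_C_of_derivative_eq_zero hsub
      have h00 : ((abelPoly (n+1)).comp (X + C y) - q).eval 0 = 0 := by
        rw [eval_sub, h0, sub_self]
      rw [hc2, eval_C] at h00
      rw [h00, map_zero] at hc2
      exact sub_eq_zero.mp hc2

/-- The Abel polynomials are of binomial type (Abel's binomial identity). -/
theorem abel_binomial_type (n : ℕ) (x y : ℚ) :
    (abelPoly n).eval (x + y) =
      ∑ k ∈ Finset.range (n + 1),
        (n.choose k : ℚ) * (abelPoly k).eval x * (abelPoly (n - k)).eval y := by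
  have h := congrArg (eval x) (abelPoly_key y n)
  rw [eval_comp] at h
  simp only [eval_add, eval_X, eval_C, eval_finset_sum, eval_mul] at h
  rw [h]
  exact Finset.sum_congr rfl fun k _ => by ring
end

section
/- Expansion theorem: if T is a linear operator on ℚ[x] that commutes with all shift operators E^a, then for every polynomial p of degree at most n, T p = ∑_{k=0}^{n} a_k d^k p / k!, where a_k = (T x^k)(0) evaluated appropriately; i.e., T is determined by the constants c_k = (T x^k) evaluated at 0 via T = ∑_k c_k d^k/k!. -/
open Polynomial

/-- Expansion theorem: a shift-invariant linear operator `T` on `ℚ[x]` satisfies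
`T = ∑_k c_k d^k / k!` where `c_k = (T x^k)(0)`. -/
theorem expansion_theorem (T : Polynomial ℚ →ₗ[ℚ] Polynomial ℚ)
    (hT : ∀ (a : ℚ) (p : Polynomial ℚ), T (p.comp (X + C a)) = (T p).comp (X + C a)) :
    ∀ (p : Polynomial ℚ) (n : ℕ), p.degree ≤ n →
      T p = ∑ k ∈ Finset.range (n + 1),
        C ((T (X ^ k)).eval 0 / (k.factorial : ℚ)) * derivative^[k] p := by
  intro p n hdeg
  apply Polynomial.funext
  intro a
  have hnd : p.natDegree < n + 1 := Nat.lt_succ_of_le (natDegree_le_iff_degree_le.2 hdeg)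
  have hcoeff : ∀ k, (hasseDeriv k p).eval a
      = (derivative^[k] p).eval a / (k.factorial : ℚ) := by
    intro k
    have h := congrFun (factorial_smul_hasseDeriv (R := ℚ) k) p
    simp only [LinearMap.smul_apply] at h
    rw [← h]
    have : (k.factorial : ℚ) ≠ 0 := Nat.cast_ne_zero.2 k.factorial_ne_zero
    rw [← Nat.cast_smul_eq_nsmul ℚ, eval_smul, smul_eq_mul]
    field_simp
  have htaylor : p.comp (X + C a) = ∑ k ∈ Finset.range (n + 1),
      ((derivative^[k] p).eval a / (k.factorial : ℚ)) • X ^ k := by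
    rw [← taylor_apply]
    nth_rewrite 1 [(taylor a p).as_sum_range' (n+1) (by rwa [natDegree_taylor])]
    refine Finset.sum_congr rfl fun k _ => ?_
    rw [taylor_coeff, hcoeff, ← C_mul_X_pow_eq_monomial, smul_eq_C_mul]
  have key : (T p).eval a = (T (p.comp (X + C a))).eval 0 := by
    rw [hT, eval_comp]
    simp
  rw [key, htaylor, map_sum, eval_finset_sum, eval_finset_sum]
  refine Finset.sum_congr rfl fun k _ => ?_
  rw [map_smul, eval_smul, smul_eq_mul, eval_mul, eval_C]
  ring
end

section
/- Any shift-invariant linear operator on ℚ[x] commutes with the derivative operator d. -/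
open Polynomial Finset

/-- Auxiliary: key coefficient computation. `coeff (hasseDeriv k p) 1 = coeff (derivative p) k`. -/
lemma hasseDeriv_coeff_one (p : Polynomial ℚ) (k : ℕ) :
    (hasseDeriv k p).coeff 1 = (derivative p).coeff k := by
  rw [hasseDeriv_coeff, coeff_derivative, Nat.add_comm 1 k, Nat.choose_succ_self_right]
  push_cast; ring

/-- Any shift-invariant linear operator on `ℚ[x]` commutes with the derivative. -/
theorem shift_invariant_commutes_with_derivative (T : Polynomial ℚ →ₗ[ℚ] Polynomial ℚ)
    (hT : ∀ (a : ℚ) (p : Polynomial ℚ), T (p.comp (X + C a)) = (T p).comp (X + C a)) :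
    ∀ p : Polynomial ℚ, T (derivative p) = derivative (T p) := by
  intro p
  set N := p.natDegree + 1 with hN
  ext n
  -- Expansion of the shift as a sum of monomials via Hasse derivatives
  have hexp : ∀ a : ℚ, p.comp (X + C a)
      = ∑ k ∈ range N, ((hasseDeriv k p).eval a) • (X : Polynomial ℚ) ^ k := by
    intro a
    have h1 : (taylor a p).natDegree < N := by
      rw [natDegree_taylor]; omega
    have := (taylor a p).as_sum_range' N h1
    rw [← taylor_apply]
    rw [this]
    refine Finset.sum_congr rfl fun k _ => ?_
    rw [taylor_coeff, smul_X_eq_monomial]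
  -- the two polynomials in `a`
  set P : Polynomial ℚ :=
    ∑ k ∈ range N, C ((T (X ^ k)).coeff n) * hasseDeriv k p with hP
  set Q : Polynomial ℚ := hasseDeriv n (T p) with hQ
  have hPQ : P = Q := by
    apply Polynomial.funext
    intro a
    have h := congrArg (fun q => q.coeff n) (hT a p)
    rw [hexp a, map_sum] at h
    simp only [map_smul] at h
    have hrhs : ((T p).comp (X + C a)).coeff n = (hasseDeriv n (T p)).eval a := by
      rw [← taylor_apply, taylor_coeff]
    rw [finset_sum_coeff] at h
    simp only [coeff_smul, smul_eq_mul] at h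
    rw [hrhs] at h
    simp only [hP, hQ, eval_finset_sum, eval_mul, eval_C]
    rw [← h]
    exact Finset.sum_congr rfl fun k _ => mul_comm _ _
  -- compare coefficient 1 in `a`
  have h1 := congrArg (fun q => q.coeff 1) hPQ
  simp only [hP, hQ, finset_sum_coeff, coeff_C_mul] at h1
  -- LHS of h1
  have hL : ∑ k ∈ range N, (T (X ^ k)).coeff n * (hasseDeriv k p).coeff 1
      = (T (derivative p)).coeff n := by
    have hd : (derivative p).natDegree < N := by
      have := natDegree_derivative_le p
      omega
    conv_rhs => rw [(derivative p).as_sum_range' N hd]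
    rw [map_sum, finset_sum_coeff]
    refine Finset.sum_congr rfl fun k _ => ?_
    rw [← smul_X_eq_monomial, map_smul, coeff_smul, smul_eq_mul,
      hasseDeriv_coeff_one, mul_comm]
  rw [hL] at h1
  rw [h1]
  rw [hasseDeriv_coeff, coeff_derivative, Nat.add_comm 1 n, Nat.choose_succ_self_right]
  push_cast; ring
end

section
/- If Q is a delta operator (a shift-invariant linear operator with Q(x) a nonzero constant), then Q(c) = 0 for every constant polynomial c, and Q lowers degree by exactly one: deg(Qp) = deg(p) - 1 for every nonconstant polynomial p. -/
open Polynomial Finset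

private lemma delta_taylor_sub (q : Polynomial ℚ) (hq : 1 ≤ q.natDegree) :
    (taylor 1 q - q).natDegree ≤ q.natDegree - 1 ∧
    (taylor 1 q - q).coeff (q.natDegree - 1) = q.natDegree * q.coeff q.natDegree := by
  set m := q.natDegree with hm
  have h1 : (taylor 1 q).coeff m = q.coeff m := by
    rw [taylor_coeff]
    have hd : (hasseDeriv m q).natDegree < 1 := by
      have := natDegree_hasseDeriv_le q m
      omega
    rw [eval_eq_sum_range' hd]
    simp [hasseDeriv_coeff]
  have h2 : (taylor 1 q).coeff (m - 1) = q.coeff (m - 1) + m * q.coeff m := by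
    rw [taylor_coeff]
    have hd : (hasseDeriv (m - 1) q).natDegree < 2 := by
      have := natDegree_hasseDeriv_le q (m - 1)
      omega
    rw [eval_eq_sum_range' hd]
    rw [Finset.sum_range_succ, Finset.sum_range_one]
    simp only [hasseDeriv_coeff, one_pow, mul_one]
    have e1 : 1 + (m - 1) = m := by omega
    have e2 : (m.choose (m - 1)) = m := by
      rw [← Nat.choose_symm (by omega : m - 1 ≤ m)]
      have : m - (m - 1) = 1 := by omega
      rw [this, Nat.choose_one_right]
    rw [e1, zero_add, Nat.choose_self, e2]
    push_cast
    ring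
  constructor
  · rw [natDegree_le_iff_coeff_eq_zero]
    intro k hk
    rcases eq_or_lt_of_le (show m ≤ k by omega) with h | h
    · rw [coeff_sub, ← h, h1, sub_self]
    · rw [coeff_sub, coeff_eq_zero_of_natDegree_lt, coeff_eq_zero_of_natDegree_lt, sub_self]
      · omega
      · rw [natDegree_taylor]; omega
  · rw [coeff_sub, h2]; ring

/-- A delta operator annihilates constants and lowers degree by exactly one. -/
theorem delta_operator_props (Q : Polynomial ℚ →ₗ[ℚ] Polynomial ℚ)
    (hshift : ∀ (a : ℚ) (p : Polynomial ℚ), Q (p.comp (X + C a)) = (Q p).comp (X + C a))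
    (hdelta : ∃ c : ℚ, c ≠ 0 ∧ Q X = C c) :
    (∀ c : ℚ, Q (C c) = 0) ∧
    (∀ p : Polynomial ℚ, 0 < p.degree → (Q p).natDegree = p.natDegree - 1 ∧ Q p ≠ 0) := by
  obtain ⟨c, hc, hQX⟩ := hdelta
  -- Q annihilates 1
  have hone : Q 1 = 0 := by
    have h := hshift 1 X
    rw [X_comp, map_add, hQX, C_comp, C_1] at h
    have h2 : C c + Q 1 = C c + 0 := by rw [add_zero]; exact h
    exact add_left_cancel h2
  have hconst : ∀ a : ℚ, Q (C a) = 0 := by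
    intro a
    have : (C a : Polynomial ℚ) = a • (1 : Polynomial ℚ) := by
      rw [smul_eq_C_mul, mul_one]
    rw [this, map_smul, hone, smul_zero]
  -- key fact about monomials
  have key : ∀ n : ℕ, 1 ≤ n → (Q (X ^ n)).natDegree = n - 1 ∧
      (Q (X ^ n)).coeff (n - 1) = n * c := by
    intro n
    induction n using Nat.strong_induction_on with
    | _ n ih =>
      intro hn
      rcases eq_or_lt_of_le hn with h1 | h2
      · subst h1
        simp [hQX]
      · -- n ≥ 2
        set q := Q (X ^ n) with hq
        set S := ∑ k ∈ range n, (n.choose k : ℚ) • Q (X ^ k) with hS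
        have hexp : taylor 1 q - q = S := by
          have h := hshift 1 (X ^ n)
          rw [pow_comp, X_comp, ← taylor_apply] at h
          have hbin : ((X + C 1 : Polynomial ℚ)) ^ n
              = ∑ k ∈ range (n + 1), (n.choose k : ℚ) • X ^ k := by
            rw [add_pow]
            apply Finset.sum_congr rfl
            intro k _
            rw [smul_eq_C_mul, C_1, one_pow, mul_one, C_eq_natCast]
            ring
          rw [hbin, map_sum] at h
          simp only [map_smul] at h
          rw [Finset.sum_range_succ, Nat.choose_self, Nat.cast_one, one_smul] at h
          rw [← h, ← hq, hS]
          ring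
        have hterm : ∀ k, k < n → (Q (X ^ k)).natDegree ≤ n - 2 := by
          intro k hk
          rcases Nat.eq_zero_or_pos k with rfl | hk1
          · simp [pow_zero, hone]
          · have := (ih k hk hk1).1
            omega
        have hSdeg : S.natDegree ≤ n - 2 := by
          apply natDegree_sum_le_of_forall_le
          intro k hk
          exact le_trans (natDegree_smul_le _ _) (hterm k (Finset.mem_range.mp hk))
        have hScoeff : S.coeff (n - 2) = (n : ℚ) * (((n : ℚ) - 1) * c) := by
          rw [hS, finset_sum_coeff]
          rw [Finset.sum_eq_single (n - 1)]
          · rw [coeff_smul]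
            have hih := (ih (n - 1) (by omega) (by omega)).2
            have e : n - 1 - 1 = n - 2 := by omega
            rw [e] at hih
            rw [smul_eq_mul, hih]
            have e2 : n.choose (n - 1) = n := by
              rw [← Nat.choose_symm (by omega : n - 1 ≤ n)]
              have : n - (n - 1) = 1 := by omega
              rw [this, Nat.choose_one_right]
            rw [e2]
            have e3 : ((n - 1 : ℕ) : ℚ) = (n : ℚ) - 1 := by
              push_cast [Nat.cast_sub (by omega : 1 ≤ n)]
              ring
            rw [e3]
          · intro k hk hkne
            rw [coeff_smul, smul_eq_mul]
            have hk' := Finset.mem_range.mp hk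
            rcases Nat.eq_zero_or_pos k with rfl | hk1
            · simp [pow_zero, hone]
            · have hd := (ih k hk' hk1).1
              have hlt : (Q (X ^ k)).natDegree < n - 2 := by omega
              rw [coeff_eq_zero_of_natDegree_lt hlt, mul_zero]
          · intro h
            exact absurd (Finset.mem_range.mpr (by omega)) h
        have hSne : S.coeff (n - 2) ≠ 0 := by
          rw [hScoeff]
          have hn0 : (n : ℚ) ≠ 0 := Nat.cast_ne_zero.mpr (by omega)
          have hn1 : (n : ℚ) - 1 ≠ 0 := by
            have : ((n - 1 : ℕ) : ℚ) = (n : ℚ) - 1 := by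
              push_cast [Nat.cast_sub (by omega : 1 ≤ n)]; ring
            rw [← this]
            exact Nat.cast_ne_zero.mpr (by omega)
          exact mul_ne_zero hn0 (mul_ne_zero hn1 hc)
        have hq1 : 1 ≤ q.natDegree := by
          by_contra hcon
          push_neg at hcon
          have hq0 : q.natDegree = 0 := by omega
          have := eq_C_of_natDegree_eq_zero hq0
          rw [this, taylor_C, sub_self] at hexp
          rw [← hexp, coeff_zero] at hSne
          exact hSne rfl
        obtain ⟨hd1, hd2⟩ := delta_taylor_sub q hq1
        have hqz : q ≠ 0 := fun h => by simp [h] at hq1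
        have hqne : q.coeff q.natDegree ≠ 0 := by
          have hl : q.coeff q.natDegree = q.leadingCoeff := rfl
          rw [hl]
          exact leadingCoeff_ne_zero.mpr hqz
        have hDdeg : ((taylor 1) q - q).natDegree = q.natDegree - 1 := by
          refine le_antisymm hd1 (le_natDegree_of_ne_zero ?_)
          rw [hd2]
          exact mul_ne_zero (Nat.cast_ne_zero.mpr (by omega)) hqne
        have hDdeg2 : ((taylor 1) q - q).natDegree = n - 2 := by
          rw [hexp]
          exact le_antisymm hSdeg (le_natDegree_of_ne_zero hSne)
        have hdeg : q.natDegree = n - 1 := by omega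
        refine ⟨hdeg, ?_⟩
        have e : q.natDegree - 1 = n - 2 := by omega
        rw [e, hexp, hScoeff, hdeg] at hd2
        have e3 : ((n - 1 : ℕ) : ℚ) = (n : ℚ) - 1 := by
          push_cast [Nat.cast_sub (by omega : 1 ≤ n)]; ring
        rw [e3] at hd2
        have hn1 : (n : ℚ) - 1 ≠ 0 := by
          rw [← e3]
          exact Nat.cast_ne_zero.mpr (by omega)
        refine mul_left_cancel₀ hn1 ?_
        linear_combination -hd2
  refine ⟨hconst, ?_⟩
  intro p hp
  have hn : 1 ≤ p.natDegree := natDegree_pos_iff_degree_pos.mpr hp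
  obtain ⟨n, hn'⟩ : ∃ m, p.natDegree = m := ⟨_, rfl⟩
  rw [hn'] at hn
  rw [hn']
  have hQp : Q p = ∑ k ∈ range (n + 1), p.coeff k • Q (X ^ k) := by
    conv_lhs => rw [as_sum_range' p (n + 1) (by omega)]
    rw [map_sum]
    apply Finset.sum_congr rfl
    intro k _
    rw [← map_smul]
    congr 1
    rw [smul_eq_C_mul, C_mul_X_pow_eq_monomial]
  have hcoeff : (Q p).coeff (n - 1) = p.coeff n * ((n : ℚ) * c) := by
    rw [hQp, finset_sum_coeff]
    rw [Finset.sum_eq_single n]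
    · rw [coeff_smul, smul_eq_mul, (key n hn).2]
    · intro k hk hkne
      have hk' := Finset.mem_range.mp hk
      rcases Nat.eq_zero_or_pos k with rfl | hk1
      · simp [pow_zero, hone]
      · have hd := (key k hk1).1
        have hlt : (Q (X ^ k)).natDegree < n - 1 := by omega
        rw [coeff_smul, coeff_eq_zero_of_natDegree_lt hlt, smul_zero]
    · intro h
      exact absurd (Finset.mem_range.mpr (by omega)) h
  have hpne : p.coeff n ≠ 0 := by
    have hl : p.coeff n = p.leadingCoeff := by rw [← hn']; rfl
    rw [hl]
    exact leadingCoeff_ne_zero.mpr (fun h => by simp [h] at hp)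
  have hne : (Q p).coeff (n - 1) ≠ 0 := by
    rw [hcoeff]
    exact mul_ne_zero hpne (mul_ne_zero (Nat.cast_ne_zero.mpr (by omega)) hc)
  have hup : (Q p).natDegree ≤ n - 1 := by
    rw [hQp]
    apply natDegree_sum_le_of_forall_le
    intro k hk
    refine le_trans (natDegree_smul_le _ _) ?_
    have hk' := Finset.mem_range.mp hk
    rcases Nat.eq_zero_or_pos k with rfl | hk1
    · simp [pow_zero, hone]
    · have := (key k hk1).1
      omega
  exact ⟨le_antisymm hup (le_natDegree_of_ne_zero hne),
    fun h => hne (by rw [h, coeff_zero])⟩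
end
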